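/- arXiv:2109.04315 — 3 statements merged into one kernel-verified Lean document; each statement's English description precedes it below -/
import Mathlib

section
/- Let (Sₙ) be a random walk with i.i.d. increments, T = inf{ i ≥ 0 : Sᵢ > 0 } the first hitting time of the positive half-line, and call n a weak descending record time if Sₙ = min_{0 ≤ k ≤ n} S_k. Then for every n ≥ 0, P(T > n) = P(n is a weak descending record time). -/
open MeasureTheory ProbabilityTheory

lemma aux_reindex {Ω : Type*} [MeasurableSpace Ω] {μ : Measure Ω}
    (X : ℕ → Ω → ℝ) (hindep : iIndepFun X μ)
    {n : ℕ} (r : Fin n → ℕ) (hr : Function.Injective r) :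
    iIndepFun (fun i => X (r i)) μ := by
  classical
  rw [iIndepFun_iff_measure_inter_preimage_eq_mul] at hindep ⊢
  intro S sets hsets
  have key := hindep (S.image r)
    (sets := Function.extend r sets (fun _ => Set.univ)) ?_
  · have hset : (⋂ i ∈ Finset.image r S, X i ⁻¹' Function.extend r sets (fun _ => Set.univ) i)
        = ⋂ i ∈ S, X (r i) ⁻¹' sets i := by
      ext ω
      simp only [Set.mem_iInter]
      constructor
      · intro h i hi
        have := h (r i) (Finset.mem_image_of_mem r hi)
        rwa [hr.extend_apply] at this
      · intro h j hj
        obtain ⟨i, hi, rfl⟩ := Finset.mem_image.mp hj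
        rw [hr.extend_apply]
        exact h i hi
    rw [hset, Finset.prod_image (fun a _ b _ h => hr h)] at key
    simpa only [hr.extend_apply] using key
  · intro j hj
    rw [Finset.mem_image] at hj
    obtain ⟨i, hiS, rfl⟩ := hj
    rw [hr.extend_apply]
    exact hsets i hiS

lemma aux_map_pi {Ω : Type*} [MeasurableSpace Ω] {μ : Measure Ω} [IsProbabilityMeasure μ]
    {n : ℕ} (Z : Fin n → Ω → ℝ) (hm : ∀ i, Measurable (Z i))
    (hi : iIndepFun Z μ) :
    μ.map (fun ω i => Z i ω) = Measure.pi (fun i => μ.map (Z i)) := by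
  have hP : ∀ i, IsProbabilityMeasure (μ.map (Z i)) :=
    fun i => Measure.isProbabilityMeasure_map (hm i).aemeasurable
  haveI : ∀ i, SigmaFinite (μ.map (Z i)) := fun i => by have := hP i; infer_instance
  refine (Measure.pi_eq (μ := fun i => μ.map (Z i)) ?_).symm
  intro s hs
  rw [Measure.map_apply (measurable_pi_lambda _ hm) (MeasurableSet.univ_pi hs)]
  have heq : (fun ω i => Z i ω) ⁻¹' (Set.univ.pi s) = ⋂ i, Z i ⁻¹' s i := by
    ext ω; simp [Set.mem_pi]
  rw [heq, hi.meas_iInter (fun i => ⟨s i, hs i, rfl⟩)]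
  exact Finset.prod_congr rfl fun i _ =>
    (Measure.map_apply (hm i) (hs i)).symm

/-- With T = inf{i ≥ 0 : Sᵢ > 0}, for every n we have
P(T > n) = P(n is a weak descending record time).  The event {T > n} is
{Sᵢ ≤ 0 for all i ≤ n}, and n is a weak descending record time iff Sₙ ≤ S_k for all k ≤ n. -/
theorem stmt3 {Ω : Type*} [MeasurableSpace Ω] {μ : Measure Ω} [IsProbabilityMeasure μ]
    (X : ℕ → Ω → ℝ) (hmeas : ∀ i, Measurable (X i))
    (hindep : iIndepFun X μ)
    (hident : ∀ i, IdentDistrib (X i) (X 0) μ μ) (n : ℕ) :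
    μ {ω | ∀ i ≤ n, (∑ j ∈ Finset.range i, X j ω) ≤ 0}
      = μ {ω | ∀ k ≤ n, (∑ j ∈ Finset.range n, X j ω) ≤ ∑ j ∈ Finset.range k, X j ω} := by
  classical
  rcases Nat.eq_zero_or_pos n with rfl | hn
  · simp
  -- the two index maps
  set r1 : Fin n → ℕ := fun i => (i : ℕ) with hr1
  set r2 : Fin n → ℕ := fun i => n - 1 - (i : ℕ) with hr2
  have hr1inj : Function.Injective r1 := fun a b h => Fin.ext h
  have hr2inj : Function.Injective r2 := by
    intro a b h
    have ha := a.isLt; have hb := b.isLt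
    simp only [hr2] at h
    exact Fin.ext (by omega)
  -- the common pi-space set
  set A : Set (Fin n → ℝ) :=
    {v | ∀ i ≤ n, (∑ j ∈ Finset.range i, (if h : j < n then v ⟨j, h⟩ else 0)) ≤ 0} with hA
  have hAmeas : MeasurableSet A := by
    have : A = ⋂ i ∈ Finset.range (n + 1),
        {v : Fin n → ℝ | (∑ j ∈ Finset.range i, (if h : j < n then v ⟨j, h⟩ else 0)) ≤ 0} := by
      ext v
      simp only [hA, Set.mem_setOf_eq, Set.mem_iInter, Finset.mem_range, Nat.lt_succ_iff]
    rw [this]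
    refine MeasurableSet.biInter (Set.to_countable _) fun i _ => ?_
    refine measurableSet_le (Finset.measurable_sum _ fun j _ => ?_) measurable_const
    by_cases h : j < n
    · simpa [h] using measurable_pi_apply (⟨j, h⟩ : Fin n)
    · simpa [h] using measurable_const
  -- event 1 as a preimage
  have hE1 : {ω | ∀ i ≤ n, (∑ j ∈ Finset.range i, X j ω) ≤ 0}
      = (fun ω (i : Fin n) => X (r1 i) ω) ⁻¹' A := by
    ext ω
    simp only [Set.mem_preimage, hA, Set.mem_setOf_eq]
    constructor <;> intro h i hi <;>
    · have hsum : (∑ j ∈ Finset.range i, (if hj : j < n then X (r1 ⟨j, hj⟩) ω else 0))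
          = ∑ j ∈ Finset.range i, X j ω := by
        refine Finset.sum_congr rfl fun j hj => ?_
        rw [Finset.mem_range] at hj
        rw [dif_pos (lt_of_lt_of_le hj hi)]
      first
        | (rw [hsum]; exact h i hi)
        | (rw [← hsum]; exact h i hi)
  -- event 2 as a preimage
  have hE2 : {ω | ∀ k ≤ n, (∑ j ∈ Finset.range n, X j ω) ≤ ∑ j ∈ Finset.range k, X j ω}
      = (fun ω (i : Fin n) => X (r2 i) ω) ⁻¹' A := by
    ext ω
    simp only [Set.mem_preimage, hA, Set.mem_setOf_eq]
    have key : ∀ i ≤ n, (∑ j ∈ Finset.range i, (if hj : j < n then X (r2 ⟨j, hj⟩) ω else 0))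
        = (∑ j ∈ Finset.range n, X j ω) - ∑ j ∈ Finset.range (n - i), X j ω := by
      intro i hi
      have h1 : (∑ j ∈ Finset.range i, (if hj : j < n then X (r2 ⟨j, hj⟩) ω else 0))
          = ∑ j ∈ Finset.range i, X (n - 1 - j) ω := by
        refine Finset.sum_congr rfl fun j hj => ?_
        rw [Finset.mem_range] at hj
        rw [dif_pos (lt_of_lt_of_le hj hi)]
      have h2 : (∑ j ∈ Finset.range i, X (n - 1 - j) ω)
          = ∑ j ∈ Finset.Ico (n - i) n, X j ω := by
        have := Finset.sum_Ico_reflect (fun j => X j ω) 0 (m := i) (n := n - 1)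
          (by omega)
        rw [← Nat.Ico_zero_eq_range]
        have e1 : n - 1 + 1 = n := by omega
        have e2 : n - 1 + 1 - i = n - i := by omega
        simpa [e1, e2] using this
      rw [h1, h2, Finset.sum_Ico_eq_sub _ (Nat.sub_le n i)]
    constructor
    · intro h i hi
      rw [key i hi, sub_nonpos]
      exact h (n - i) (Nat.sub_le n i)
    · intro h k hk
      have := h (n - k) (Nat.sub_le n k)
      rw [key (n - k) (Nat.sub_le n k), sub_nonpos] at this
      have e : n - (n - k) = k := by omega
      rwa [e] at this
  -- both maps have the same law
  have hind1 : iIndepFun (fun i : Fin n => X (r1 i)) μ :=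
    aux_reindex X hindep r1 hr1inj
  have hind2 : iIndepFun (fun i : Fin n => X (r2 i)) μ :=
    aux_reindex X hindep r2 hr2inj
  have hlaw1 : μ.map (fun ω (i : Fin n) => X (r1 i) ω)
      = Measure.pi (fun _ : Fin n => μ.map (X 0)) := by
    rw [aux_map_pi _ (fun i => hmeas _) hind1]
    congr 1
    ext i : 1
    exact (hident (r1 i)).map_eq
  have hlaw2 : μ.map (fun ω (i : Fin n) => X (r2 i) ω)
      = Measure.pi (fun _ : Fin n => μ.map (X 0)) := by
    rw [aux_map_pi _ (fun i => hmeas _) hind2]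
    congr 1
    ext i : 1
    exact (hident (r2 i)).map_eq
  have hm1 : Measurable (fun ω (i : Fin n) => X (r1 i) ω) :=
    measurable_pi_lambda _ fun i => hmeas _
  have hm2 : Measurable (fun ω (i : Fin n) => X (r2 i) ω) :=
    measurable_pi_lambda _ fun i => hmeas _
  rw [hE1, hE2, ← Measure.map_apply hm1 hAmeas, ← Measure.map_apply hm2 hAmeas,
    hlaw1, hlaw2]
end

section
/- Let (Sₙ) be a random walk with i.i.d. increments bounded above by a constant C and with strictly positive mean μ = E[X] > 0. Let T = inf{i ≥ 0 : Sᵢ > 0}. Then E[T] ≤ C/μ; in particular E[T] < ∞. -/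
open MeasureTheory ProbabilityTheory
open scoped ENNReal

private lemma stmt5_ptwise (S : ℕ → ℝ) :
    (⨅ i ∈ {i : ℕ | 0 < S i}, (i : ℝ≥0∞))
      = ∑' i : ℕ, (if ∀ j ≤ i, S j ≤ 0 then (1:ℝ≥0∞) else 0) := by
  classical
  by_cases h : ∃ i, 0 < S i
  · set k := Nat.find h with hk
    have hkmem : 0 < S k := Nat.find_spec h
    have hlt : ∀ j < k, S j ≤ 0 := fun j hj => le_of_not_gt (Nat.find_min h hj)
    have hiff : ∀ i, (∀ j ≤ i, S j ≤ 0) ↔ i < k := by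
      intro i
      constructor
      · intro hall
        by_contra hik
        exact absurd hkmem (not_lt.2 (hall k (not_lt.1 hik)))
      · intro hik j hj
        exact hlt j (lt_of_le_of_lt hj hik)
    have hL : (⨅ i ∈ {i : ℕ | 0 < S i}, (i : ℝ≥0∞)) = (k : ℝ≥0∞) := by
      apply le_antisymm
      · exact biInf_le _ hkmem
      · refine le_iInf₂ fun i hi => ?_
        exact_mod_cast Nat.cast_le.2 (Nat.find_min' h hi)
    have hR : (∑' i : ℕ, (if ∀ j ≤ i, S j ≤ 0 then (1:ℝ≥0∞) else 0)) = k := by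
      rw [tsum_eq_sum (s := Finset.range k)
        (f := fun i => if ∀ j ≤ i, S j ≤ 0 then (1:ℝ≥0∞) else 0)]
      · rw [Finset.sum_congr rfl fun i hi => if_pos ((hiff i).2 (Finset.mem_range.1 hi))]
        simp
      · intro i hi
        exact if_neg fun hall => hi (Finset.mem_range.2 ((hiff i).1 hall))
    rw [hL, hR]
  · push_neg at h
    have hL : {i : ℕ | 0 < S i} = ∅ :=
      Set.eq_empty_of_forall_notMem fun i hi => absurd hi (not_lt.2 (h i))
    rw [hL]
    simp only [Set.mem_empty_iff_false, not_false_eq_true, iInf_neg, iInf_top]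
    have : ∀ i, (if ∀ j ≤ i, S j ≤ 0 then (1:ℝ≥0∞) else 0) = 1 := fun i => if_pos fun j _ => h j
    rw [tsum_congr this]
    exact (ENNReal.tsum_const_eq_top_of_ne_zero (α := ℕ) one_ne_zero).symm

private lemma stmt5_sum_bound (x : ℕ → ℝ) (C : ℝ) (hC : 0 < C) (hx : ∀ j, x j ≤ C) (n : ℕ) :
    ∑ i ∈ Finset.range n,
      (if ∀ j ≤ i, (∑ l ∈ Finset.range j, x l) ≤ 0 then x i else 0) ≤ C := by
  classical
  set P : ℕ → Prop := fun i => ∀ j ≤ i, (∑ l ∈ Finset.range j, x l) ≤ 0 with hP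
  have hsucc : ∀ m, P m → ∑ l ∈ Finset.range (m+1), x l ≤ C := by
    intro m hm
    rw [Finset.sum_range_succ]
    have := hm m le_rfl
    linarith [hx m]
  rcases Nat.eq_zero_or_pos n with hn | hn
  · subst hn; simpa using hC.le
  by_cases hall : ∀ i < n, P i
  · have hsum : ∑ i ∈ Finset.range n,
        (if P i then x i else 0) = ∑ i ∈ Finset.range n, x i :=
      Finset.sum_congr rfl fun i hi => if_pos (hall i (Finset.mem_range.1 hi))
    rw [hsum]
    obtain ⟨m, rfl⟩ := Nat.exists_eq_add_of_lt hn
    simpa using hsucc m (hall m (by omega))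
  · push_neg at hall
    obtain ⟨i₀, hi₀n, hi₀⟩ := hall
    have hex : ∃ i, ¬ P i := ⟨i₀, hi₀⟩
    set t := Nat.find hex with ht
    have htn : t < n := lt_of_le_of_lt (Nat.find_min' hex hi₀) hi₀n
    have hPlt : ∀ i < t, P i := fun i hi => not_not.1 (Nat.find_min hex hi)
    have hPge : ∀ i, t ≤ i → ¬ P i := by
      intro i hi hPi
      exact Nat.find_spec hex (fun j hj => hPi j (le_trans hj hi))
    have hsum : ∑ i ∈ Finset.range n, (if P i then x i else 0)
        = ∑ i ∈ Finset.range t, x i := by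
      rw [← Finset.sum_range_add_sum_Ico _ htn.le]
      have h1 : ∑ i ∈ Finset.range t, (if P i then x i else 0)
          = ∑ i ∈ Finset.range t, x i :=
        Finset.sum_congr rfl fun i hi => if_pos (hPlt i (Finset.mem_range.1 hi))
      have h2 : ∑ i ∈ Finset.Ico t n, (if P i then x i else 0) = 0 :=
        Finset.sum_eq_zero fun i hi => if_neg (hPge i (Finset.mem_Ico.1 hi).1)
      rw [h1, h2, add_zero]
    rw [hsum]
    have ht1 : 1 ≤ t := by
      rcases Nat.eq_zero_or_pos t with h0 | h; swap; · exact h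
      exfalso
      exact hPge 0 h0.le (fun j hj => by interval_cases j; simp)
    obtain ⟨m, hm⟩ := Nat.exists_eq_add_of_lt (by omega : 0 < t)
    rw [hm]
    simpa using hsucc m (hPlt m (by omega))

private lemma stmt5_indep_integral {Ω : Type*} [MeasurableSpace Ω] {μ : Measure Ω}
    [IsProbabilityMeasure μ]
    (X : ℕ → Ω → ℝ) (hmeas : ∀ i, Measurable (X i))
    (hindep : iIndepFun X μ)
    (hident : ∀ i, IdentDistrib (X i) (X 0) μ μ)
    (hint : Integrable (X 0) μ) (i : ℕ) :
    ∫ ω, ({ω | ∀ j ≤ i, ∑ l ∈ Finset.range j, X l ω ≤ 0}).indicator (X i) ω ∂μ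
      = (∫ ω, X 0 ω ∂μ) * (μ {ω | ∀ j ≤ i, ∑ l ∈ Finset.range j, X l ω ≤ 0}).toReal := by
  classical
  set A : Set Ω := {ω | ∀ j ≤ i, ∑ l ∈ Finset.range j, X l ω ≤ 0} with hA
  have hAmeas : MeasurableSet A := by
    have : A = ⋂ j ∈ Finset.range (i+1), {ω | ∑ l ∈ Finset.range j, X l ω ≤ 0} := by
      ext ω; simp [hA, Nat.lt_succ_iff]
    rw [this]
    exact Finset.measurableSet_biInter _ fun j _ =>
      measurableSet_le (Finset.measurable_sum _ fun l _ => hmeas l) measurable_const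
  set B : Set ({x // x ∈ Finset.range i} → ℝ) :=
    {v | ∀ j ≤ i, (∑ l ∈ Finset.range j,
      if h : l ∈ Finset.range i then v ⟨l, h⟩ else 0) ≤ 0} with hB
  have hBmeas : MeasurableSet B := by
    have : B = ⋂ j ∈ Finset.range (i+1), {v : {x // x ∈ Finset.range i} → ℝ |
        (∑ l ∈ Finset.range j, if h : l ∈ Finset.range i then v ⟨l, h⟩ else 0) ≤ 0} := by
      ext v
      simp [hB, Nat.lt_succ_iff]
    rw [this]
    refine Finset.measurableSet_biInter _ fun j _ => ?_
    exact measurableSet_le (by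
      refine Finset.measurable_sum _ fun l _ => ?_
      by_cases h : l ∈ Finset.range i
      · simpa [h] using measurable_pi_apply (⟨l, h⟩ : {x // x ∈ Finset.range i})
      · simp [h]) measurable_const
  have hsum : ∀ ω, ∀ j ≤ i, (∑ l ∈ Finset.range j,
      if h : l ∈ Finset.range i then X l ω else 0) = ∑ l ∈ Finset.range j, X l ω := by
    intro ω j hj
    refine Finset.sum_congr rfl fun l hl => ?_
    rw [dif_pos (Finset.mem_range.2 (lt_of_lt_of_le (Finset.mem_range.1 hl) hj))]
  have hpre : ∀ ω, (ω ∈ A ↔ (fun l : {x // x ∈ Finset.range i} => X l ω) ∈ B) := by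
    intro ω
    constructor
    · intro hω j hj
      rw [hsum ω j hj]; exact hω j hj
    · intro hω j hj
      have := hω j hj
      rwa [hsum ω j hj] at this
  have hIF : IndepFun (X i) (A.indicator (fun _ => (1:ℝ))) μ := by
    have h1 : IndepFun (fun ω (j : {x // x ∈ ({i} : Finset ℕ)}) => X j ω)
        (fun ω (l : {x // x ∈ Finset.range i}) => X l ω) μ :=
      hindep.indepFun_finset {i} (Finset.range i)
        (by simp [Finset.disjoint_left]) hmeas
    have h2 := h1.comp (_mγ := Real.measurableSpace) (_mγ' := Real.measurableSpace)
      (φ := fun v => v ⟨i, Finset.mem_singleton_self i⟩)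
      (ψ := B.indicator (fun _ => (1:ℝ)))
      (measurable_pi_apply _) (measurable_const.indicator hBmeas)
    have heq1 : ((fun v : {x // x ∈ ({i} : Finset ℕ)} → ℝ =>
        v ⟨i, Finset.mem_singleton_self i⟩) ∘ (fun ω (j : {x // x ∈ ({i} : Finset ℕ)}) => X j ω))
        = X i := rfl
    have heq2 : (B.indicator (fun _ => (1:ℝ)) ∘
        (fun ω (l : {x // x ∈ Finset.range i}) => X l ω)) = A.indicator (fun _ => (1:ℝ)) := by
      funext ω
      simp only [Function.comp_apply]
      by_cases hω : ω ∈ A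
      · rw [Set.indicator_of_mem ((hpre ω).1 hω), Set.indicator_of_mem hω]
      · rw [Set.indicator_of_notMem (fun hc => hω ((hpre ω).2 hc)),
          Set.indicator_of_notMem hω]
    rwa [heq1, heq2] at h2
  have hXi : Integrable (X i) μ := (hident i).integrable_iff.2 hint
  have hInd : Integrable (A.indicator (fun _ => (1:ℝ))) μ :=
    (integrable_const (1:ℝ)).indicator hAmeas
  have hmul : ∀ ω, A.indicator (X i) ω = X i ω * A.indicator (fun _ => (1:ℝ)) ω := by
    intro ω
    by_cases hω : ω ∈ A <;> simp [hω]
  calc ∫ ω, A.indicator (X i) ω ∂μ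
      = ∫ ω, X i ω * A.indicator (fun _ => (1:ℝ)) ω ∂μ := by
        exact integral_congr_ae (Filter.Eventually.of_forall hmul)
    _ = (∫ ω, X i ω ∂μ) * ∫ ω, A.indicator (fun _ => (1:ℝ)) ω ∂μ :=
        hIF.integral_fun_mul_eq_mul_integral hXi.aestronglyMeasurable hInd.aestronglyMeasurable
    _ = (∫ ω, X 0 ω ∂μ) * (μ A).toReal := by
        rw [(hident i).integral_eq, integral_indicator_const (1:ℝ) hAmeas]
        simp [measureReal_def]

/-- If the i.i.d. increments are bounded above by C and have mean μ₀ = E[X] > 0, then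
E[T] ≤ C / μ₀ where T = inf{i ≥ 0 : Sᵢ > 0}; in particular E[T] < ∞. -/
theorem stmt5 {Ω : Type*} [MeasurableSpace Ω] {μ : Measure Ω} [IsProbabilityMeasure μ]
    (X : ℕ → Ω → ℝ) (hmeas : ∀ i, Measurable (X i))
    (hindep : iIndepFun X μ)
    (hident : ∀ i, IdentDistrib (X i) (X 0) μ μ)
    (hint : Integrable (X 0) μ) (C : ℝ) (hC : 0 < C)
    (hbdd : ∀ i, ∀ᵐ ω ∂μ, X i ω ≤ C) (hpos : 0 < ∫ ω, X 0 ω ∂μ) :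
    (∫⁻ ω, ⨅ i ∈ {i : ℕ | 0 < ∑ j ∈ Finset.range i, X j ω}, (i : ℝ≥0∞) ∂μ)
        ≤ ENNReal.ofReal (C / ∫ ω, X 0 ω ∂μ) ∧
      (∫⁻ ω, ⨅ i ∈ {i : ℕ | 0 < ∑ j ∈ Finset.range i, X j ω}, (i : ℝ≥0∞) ∂μ) < ⊤ := by
  classical
  set μ₀ : ℝ := ∫ ω, X 0 ω ∂μ with hμ₀
  set A : ℕ → Set Ω := fun i => {ω | ∀ j ≤ i, ∑ l ∈ Finset.range j, X l ω ≤ 0} with hAdef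
  have hAmeas : ∀ i, MeasurableSet (A i) := by
    intro i
    have : A i = ⋂ j ∈ Finset.range (i+1), {ω | ∑ l ∈ Finset.range j, X l ω ≤ 0} := by
      ext ω; simp [hAdef, Nat.lt_succ_iff]
    rw [this]
    exact Finset.measurableSet_biInter _ fun j _ =>
      measurableSet_le (Finset.measurable_sum _ fun l _ => hmeas l) measurable_const
  -- Step I: lintegral of T equals the sum of measures
  have hTsum : (∫⁻ ω, ⨅ i ∈ {i : ℕ | 0 < ∑ j ∈ Finset.range i, X j ω}, (i : ℝ≥0∞) ∂μ)
      = ∑' i : ℕ, μ (A i) := by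
    have hpt : ∀ ω, (⨅ i ∈ {i : ℕ | 0 < ∑ j ∈ Finset.range i, X j ω}, (i : ℝ≥0∞))
        = ∑' i : ℕ, (A i).indicator (fun _ => (1:ℝ≥0∞)) ω := by
      intro ω
      rw [stmt5_ptwise (fun i => ∑ j ∈ Finset.range i, X j ω)]
      refine tsum_congr fun i => ?_
      by_cases h : ω ∈ A i
      · rw [Set.indicator_of_mem h]
        exact if_pos (show ∀ j ≤ i, ∑ l ∈ Finset.range j, X l ω ≤ 0 from h)
      · rw [Set.indicator_of_notMem h]
        exact if_neg (show ¬ ∀ j ≤ i, ∑ l ∈ Finset.range j, X l ω ≤ 0 from h)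
    rw [lintegral_congr hpt,
      lintegral_tsum fun i => (measurable_const.indicator (hAmeas i)).aemeasurable]
    refine tsum_congr fun i => ?_
    rw [lintegral_indicator (hAmeas i), setLIntegral_const, one_mul]
  -- Step II: partial sums of the real measures are bounded
  have hpartial : ∀ n : ℕ, ∑ i ∈ Finset.range n, (μ (A i)).toReal ≤ C / μ₀ := by
    intro n
    have hInt : ∀ i, Integrable ((A i).indicator (X i)) μ := fun i =>
      ((hident i).integrable_iff.2 hint).indicator (hAmeas i)
    have hae : ∀ᵐ ω ∂μ, ∑ i ∈ Finset.range n, (A i).indicator (X i) ω ≤ C := by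
      have hall : ∀ᵐ ω ∂μ, ∀ j, X j ω ≤ C := ae_all_iff.2 hbdd
      filter_upwards [hall] with ω hω
      have := stmt5_sum_bound (fun j => X j ω) C hC hω n
      refine le_trans (le_of_eq (Finset.sum_congr rfl fun i _ => ?_)) this
      by_cases h : ω ∈ A i
      · rw [Set.indicator_of_mem h]
        exact (if_pos (show ∀ j ≤ i, ∑ l ∈ Finset.range j, X l ω ≤ 0 from h)).symm
      · rw [Set.indicator_of_notMem h]
        exact (if_neg (show ¬ ∀ j ≤ i, ∑ l ∈ Finset.range j, X l ω ≤ 0 from h)).symm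
    have hint1 : ∫ ω, ∑ i ∈ Finset.range n, (A i).indicator (X i) ω ∂μ
        = μ₀ * ∑ i ∈ Finset.range n, (μ (A i)).toReal := by
      rw [integral_finset_sum _ fun i _ => hInt i, Finset.mul_sum]
      exact Finset.sum_congr rfl fun i _ =>
        stmt5_indep_integral X hmeas hindep hident hint i
    have hle : μ₀ * ∑ i ∈ Finset.range n, (μ (A i)).toReal ≤ C := by
      rw [← hint1]
      calc ∫ ω, ∑ i ∈ Finset.range n, (A i).indicator (X i) ω ∂μ
          ≤ ∫ _, C ∂μ := integral_mono_ae
            (integrable_finset_sum _ fun i _ => hInt i) (integrable_const C) hae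
        _ = C := by simp
    rw [le_div_iff₀ hpos]
    linarith [hle]
  -- Step III: conclude
  have hbound : (∑' i : ℕ, μ (A i)) ≤ ENNReal.ofReal (C / μ₀) := by
    rw [ENNReal.tsum_eq_iSup_sum]
    refine iSup_le fun s => ?_
    obtain ⟨n, hn⟩ : ∃ n, s ⊆ Finset.range n :=
      ⟨(s.sup id) + 1, fun x hx => Finset.mem_range.2 (Nat.lt_succ_of_le (Finset.le_sup (f := id) hx))⟩
    calc ∑ i ∈ s, μ (A i) ≤ ∑ i ∈ Finset.range n, μ (A i) :=
          Finset.sum_le_sum_of_subset hn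
      _ = ENNReal.ofReal (∑ i ∈ Finset.range n, (μ (A i)).toReal) := by
          rw [ENNReal.ofReal_sum_of_nonneg fun i _ => ENNReal.toReal_nonneg]
          exact Finset.sum_congr rfl fun i _ => (ENNReal.ofReal_toReal (measure_ne_top μ _)).symm
      _ ≤ ENNReal.ofReal (C / μ₀) := ENNReal.ofReal_le_ofReal (hpartial n)
  rw [hTsum]
  exact ⟨hbound, lt_of_le_of_lt hbound ENNReal.ofReal_lt_top⟩
end

section
/- If E[T] < ∞ where T is the first hitting time of (0,∞) by a random walk with i.i.d. increments, then almost surely the walk has only finitely many weak descending record times, and hence is bounded below almost surely. -/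
open MeasureTheory ProbabilityTheory
open scoped ENNReal

namespace Stmt8Aux

variable {Ω : Type*} [MeasurableSpace Ω] {μ : Measure Ω} [IsProbabilityMeasure μ]

lemma map_eq_pi (X : ℕ → Ω → ℝ) (hmeas : ∀ i, Measurable (X i))
    (hindep : iIndepFun X μ)
    (hident : ∀ i, IdentDistrib (X i) (X 0) μ μ)
    {n : ℕ} (σ : Fin n → ℕ) (hσ : Function.Injective σ) :
    Measure.map (fun ω (i : Fin n) => X (σ i) ω) μ
      = Measure.pi (fun _ : Fin n => μ.map (X 0)) := by
  have hprob : IsProbabilityMeasure (μ.map (X 0)) :=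
    Measure.isProbabilityMeasure_map (hmeas 0).aemeasurable
  have hF : Measurable (fun ω (i : Fin n) => X (σ i) ω) :=
    measurable_pi_lambda _ fun i => hmeas (σ i)
  refine (Measure.pi_eq fun s hs => ?_).symm
  rw [Measure.map_apply hF (MeasurableSet.univ_pi hs)]
  have hpre : (fun ω (i : Fin n) => X (σ i) ω) ⁻¹' Set.pi Set.univ s
      = ⋂ i : Fin n, X (σ i) ⁻¹' s i := by
    ext ω; simp [Set.mem_pi]
  classical
  set t : ℕ → Set ℝ := fun j => ⋂ i : Fin n, ⋂ _ : σ i = j, s i with ht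
  have hts : ∀ i : Fin n, t (σ i) = s i := by
    intro i
    apply Set.Subset.antisymm
    · intro x hx
      simp only [ht, Set.mem_iInter] at hx
      exact hx i rfl
    · intro x hx
      simp only [ht, Set.mem_iInter]
      intro i' hi'
      cases hσ hi'
      exact hx
  have hiInter : (⋂ i : Fin n, X (σ i) ⁻¹' s i)
      = ⋂ j ∈ Finset.image σ Finset.univ, X j ⁻¹' t j := by
    ext ω
    simp only [Set.mem_iInter, Finset.mem_image, Finset.mem_univ, true_and, Set.mem_preimage]
    constructor
    · rintro h j ⟨i, rfl⟩
      rw [hts i]; exact h i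
    · intro h i
      have := h (σ i) ⟨i, rfl⟩
      rwa [hts i] at this
  have htmeas : ∀ j, MeasurableSet (t j) :=
    fun j => MeasurableSet.iInter fun i => MeasurableSet.iInter fun _ => hs i
  rw [hpre, hiInter, hindep.measure_inter_preimage_eq_mul _ (fun j _ => htmeas j),
    Finset.prod_image (fun i _ j _ h => hσ h)]
  refine Finset.prod_congr rfl fun i _ => ?_
  rw [hts i, ← Measure.map_apply (hmeas (σ i)) (hs i), (hident (σ i)).map_eq]

lemma sum_reflect (f : ℕ → ℝ) {i n : ℕ} (h : i ≤ n) :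
    ∑ j ∈ Finset.range i, f (n - 1 - j) = ∑ m ∈ Finset.Ico (n - i) n, f m := by
  rw [Finset.sum_Ico_eq_sum_range]
  have h2 : n - (n - i) = i := by omega
  rw [h2, ← Finset.sum_range_reflect (fun j => f (n - i + j)) i]
  refine Finset.sum_congr rfl fun j hj => ?_
  rw [Finset.mem_range] at hj
  congr 1
  omega

lemma measure_record_eq (X : ℕ → Ω → ℝ) (hmeas : ∀ i, Measurable (X i))
    (hindep : iIndepFun X μ)
    (hident : ∀ i, IdentDistrib (X i) (X 0) μ μ) (n : ℕ) :
    μ {ω | ∀ k ≤ n, (∑ j ∈ Finset.range n, X j ω) ≤ ∑ j ∈ Finset.range k, X j ω}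
      = μ {ω | ∀ i ≤ n, (∑ j ∈ Finset.range i, X j ω) ≤ 0} := by
  classical
  set Q : ℕ → (Fin n → ℝ) → ℝ := fun j v => if h : j < n then v ⟨j, h⟩ else 0 with hQdef
  have hQ : ∀ j, Measurable (Q j) := by
    intro j
    by_cases h : j < n
    · simp only [hQdef, dif_pos h]; exact measurable_pi_apply _
    · simp only [hQdef, dif_neg h]; exact measurable_const
  set B : Set (Fin n → ℝ) :=
    {v | ∀ i ≤ n, (∑ j ∈ Finset.range i, Q j v) ≤ 0} with hBdef
  have hB : MeasurableSet B := by
    have : B = ⋂ i, ⋂ (_ : i ≤ n), {v | (∑ j ∈ Finset.range i, Q j v) ≤ 0} := by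
      ext v; simp [hBdef]
    rw [this]
    exact MeasurableSet.iInter fun i => MeasurableSet.iInter fun _ =>
      measurableSet_le (Finset.measurable_sum _ fun j _ => hQ j) measurable_const
  set σ : Fin n → ℕ := fun i => (i : ℕ) with hσdef
  set σ' : Fin n → ℕ := fun i => n - 1 - (i : ℕ) with hσ'def
  have hσinj : Function.Injective σ := Fin.val_injective
  have hσ'inj : Function.Injective σ' := by
    intro a b hab
    have ha := a.isLt; have hb := b.isLt
    simp only [hσ'def] at hab
    exact Fin.ext (by omega)
  have hF : Measurable (fun ω (i : Fin n) => X (σ i) ω) :=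
    measurable_pi_lambda _ fun i => hmeas (σ i)
  have hF' : Measurable (fun ω (i : Fin n) => X (σ' i) ω) :=
    measurable_pi_lambda _ fun i => hmeas (σ' i)
  have hpre1 : (fun ω (i : Fin n) => X (σ i) ω) ⁻¹' B
      = {ω | ∀ i ≤ n, (∑ j ∈ Finset.range i, X j ω) ≤ 0} := by
    ext ω
    simp only [Set.mem_preimage, hBdef, Set.mem_setOf_eq]
    refine forall₂_congr fun i hi => ?_
    have : (∑ j ∈ Finset.range i, Q j (fun i' : Fin n => X (σ i') ω))
        = ∑ j ∈ Finset.range i, X j ω := by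
      refine Finset.sum_congr rfl fun j hj => ?_
      rw [Finset.mem_range] at hj
      simp only [hQdef, dif_pos (lt_of_lt_of_le hj hi), hσdef]
    rw [this]
  have hpre2 : (fun ω (i : Fin n) => X (σ' i) ω) ⁻¹' B
      = {ω | ∀ k ≤ n, (∑ j ∈ Finset.range n, X j ω) ≤ ∑ j ∈ Finset.range k, X j ω} := by
    ext ω
    simp only [Set.mem_preimage, hBdef, Set.mem_setOf_eq]
    have hsum : ∀ i ≤ n, (∑ j ∈ Finset.range i, Q j (fun i' : Fin n => X (σ' i') ω))
        = (∑ j ∈ Finset.range n, X j ω) - ∑ j ∈ Finset.range (n - i), X j ω := by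
      intro i hi
      have h1 : (∑ j ∈ Finset.range i, Q j (fun i' : Fin n => X (σ' i') ω))
          = ∑ j ∈ Finset.range i, X (n - 1 - j) ω := by
        refine Finset.sum_congr rfl fun j hj => ?_
        rw [Finset.mem_range] at hj
        simp only [hQdef, dif_pos (lt_of_lt_of_le hj hi), hσ'def]
      rw [h1, sum_reflect (fun m => X m ω) hi,
        Finset.sum_Ico_eq_sub _ (Nat.sub_le n i)]
    constructor
    · intro h k hk
      have := h (n - k) (Nat.sub_le n k)
      rw [hsum (n - k) (Nat.sub_le n k)] at this
      have hnk : n - (n - k) = k := by omega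
      rw [hnk] at this
      linarith
    · intro h i hi
      rw [hsum i hi]
      have := h (n - i) (Nat.sub_le n i)
      linarith
  calc μ {ω | ∀ k ≤ n, (∑ j ∈ Finset.range n, X j ω) ≤ ∑ j ∈ Finset.range k, X j ω}
      = μ ((fun ω (i : Fin n) => X (σ' i) ω) ⁻¹' B) := by rw [hpre2]
    _ = Measure.map (fun ω (i : Fin n) => X (σ' i) ω) μ B :=
        (Measure.map_apply hF' hB).symm
    _ = Measure.map (fun ω (i : Fin n) => X (σ i) ω) μ B := by
        rw [map_eq_pi X hmeas hindep hident σ hσinj,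
          map_eq_pi X hmeas hindep hident σ' hσ'inj]
    _ = μ ((fun ω (i : Fin n) => X (σ i) ω) ⁻¹' B) := Measure.map_apply hF hB
    _ = μ {ω | ∀ i ≤ n, (∑ j ∈ Finset.range i, X j ω) ≤ 0} := by rw [hpre1]

lemma tsum_indicator_le (c : ℝ≥0∞) :
    (∑' n : ℕ, if ((n : ℝ≥0∞) < c) then (1 : ℝ≥0∞) else 0) ≤ c + 1 := by
  rcases eq_or_ne c ⊤ with rfl | hc
  · simp
  · set N := Nat.floor c.toReal + 1 with hN
    have hcN : c ≤ (N : ℝ≥0∞) := by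
      have h1 : c.toReal < (N : ℝ) := by
        push_cast
        simpa [hN] using Nat.lt_floor_add_one c.toReal
      calc c = ENNReal.ofReal c.toReal := (ENNReal.ofReal_toReal hc).symm
        _ ≤ ENNReal.ofReal (N : ℝ) := ENNReal.ofReal_le_ofReal h1.le
        _ = (N : ℝ≥0∞) := ENNReal.ofReal_natCast N
    have hzero : ∀ n ∉ Finset.range N, (if ((n : ℝ≥0∞) < c) then (1 : ℝ≥0∞) else 0) = 0 := by
      intro n hn
      rw [Finset.mem_range, not_lt] at hn
      have : c ≤ (n : ℝ≥0∞) := hcN.trans (by exact_mod_cast hn)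
      rw [if_neg (not_lt.mpr this)]
    rw [tsum_eq_sum hzero]
    calc (∑ n ∈ Finset.range N, if ((n : ℝ≥0∞) < c) then (1 : ℝ≥0∞) else 0)
        ≤ ∑ _n ∈ Finset.range N, (1 : ℝ≥0∞) :=
          Finset.sum_le_sum fun n _ => by split <;> simp
      _ = (N : ℝ≥0∞) := by simp
      _ ≤ c + 1 := by
          have hfloor : ((Nat.floor c.toReal : ℕ) : ℝ≥0∞) ≤ c := by
            calc ((Nat.floor c.toReal : ℕ) : ℝ≥0∞)
                = ENNReal.ofReal ((Nat.floor c.toReal : ℕ) : ℝ) :=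
                  (ENNReal.ofReal_natCast _).symm
              _ ≤ ENNReal.ofReal c.toReal :=
                  ENNReal.ofReal_le_ofReal (Nat.floor_le ENNReal.toReal_nonneg)
              _ = c := ENNReal.ofReal_toReal hc
          have : (N : ℝ≥0∞) = ((Nat.floor c.toReal : ℕ) : ℝ≥0∞) + 1 := by
            rw [hN]; push_cast; ring
          rw [this]
          exact add_le_add_left hfloor 1

end Stmt8Aux

open Stmt8Aux

/-- If E[T] < ∞ where T = inf{i ≥ 0 : Sᵢ > 0}, then a.s. the walk has only finitely many
weak descending record times, and hence is bounded below a.s. -/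
theorem stmt8 {Ω : Type*} [MeasurableSpace Ω] {μ : Measure Ω} [IsProbabilityMeasure μ]
    (X : ℕ → Ω → ℝ) (hmeas : ∀ i, Measurable (X i))
    (hindep : iIndepFun X μ)
    (hident : ∀ i, IdentDistrib (X i) (X 0) μ μ)
    (hT : (∫⁻ ω, ⨅ i ∈ {i : ℕ | 0 < ∑ j ∈ Finset.range i, X j ω}, (i : ℝ≥0∞) ∂μ) < ⊤) :
    (∀ᵐ ω ∂μ, Set.Finite
        {n : ℕ | ∀ k ≤ n, (∑ j ∈ Finset.range n, X j ω) ≤ ∑ j ∈ Finset.range k, X j ω}) ∧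
      ∀ᵐ ω ∂μ, BddBelow (Set.range fun n => ∑ i ∈ Finset.range n, X i ω) := by
  classical
  set S : ℕ → Ω → ℝ := fun n ω => ∑ j ∈ Finset.range n, X j ω with hSdef
  have hSmeas : ∀ n, Measurable (S n) := fun n => Finset.measurable_sum _ fun j _ => hmeas j
  set T : Ω → ℝ≥0∞ := fun ω => ⨅ i ∈ {i : ℕ | 0 < S i ω}, (i : ℝ≥0∞) with hTdef
  set E : ℕ → Set Ω := fun n => {ω | ∀ i ≤ n, S i ω ≤ 0} with hEdef
  have hEmeas : ∀ n, MeasurableSet (E n) := by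
    intro n
    have : E n = ⋂ i, ⋂ (_ : i ≤ n), {ω | S i ω ≤ 0} := by ext ω; simp [hEdef]
    rw [this]
    exact MeasurableSet.iInter fun i => MeasurableSet.iInter fun _ =>
      measurableSet_le (hSmeas i) measurable_const
  -- E n = {T > n}
  have hTgt : ∀ (n : ℕ) (ω : Ω), ω ∈ E n ↔ (n : ℝ≥0∞) < T ω := by
    intro n ω
    constructor
    · intro h
      have h1 : ((n : ℝ≥0∞) + 1) ≤ T ω := by
        refine le_iInf₂ fun i hi => ?_
        have hni : n < i := by
          by_contra hni
          push_neg at hni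
          exact absurd hi (not_lt.mpr (h i hni))
        have : ((n + 1 : ℕ) : ℝ≥0∞) ≤ (i : ℝ≥0∞) := by exact_mod_cast hni
        simpa using this
      exact lt_of_lt_of_le (ENNReal.lt_add_right (by simp) one_ne_zero) h1
    · intro h i hi
      by_contra hpos
      push_neg at hpos
      have h1 : T ω ≤ (i : ℝ≥0∞) := iInf₂_le i hpos
      have h2 : T ω ≤ (n : ℝ≥0∞) := h1.trans (by exact_mod_cast hi)
      exact absurd h (not_lt.mpr h2)
  -- summability
  have hsum : (∑' n : ℕ, μ (E n)) ≤ (∫⁻ ω, T ω ∂μ) + 1 := by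
    have h1 : ∀ n : ℕ, μ (E n) = ∫⁻ ω, (E n).indicator (fun _ => (1 : ℝ≥0∞)) ω ∂μ := by
      intro n
      rw [lintegral_indicator_const (hEmeas n), one_mul]
    calc (∑' n : ℕ, μ (E n))
        = ∑' n : ℕ, ∫⁻ ω, (E n).indicator (fun _ => (1 : ℝ≥0∞)) ω ∂μ := by
          simp_rw [h1]
      _ = ∫⁻ ω, ∑' n : ℕ, (E n).indicator (fun _ => (1 : ℝ≥0∞)) ω ∂μ :=
          (lintegral_tsum fun n =>
            ((measurable_const.indicator (hEmeas n)).aemeasurable)).symm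
      _ ≤ ∫⁻ ω, (T ω + 1) ∂μ := by
          refine lintegral_mono fun ω => ?_
          have : ∀ n : ℕ, (E n).indicator (fun _ => (1 : ℝ≥0∞)) ω
              = if ((n : ℝ≥0∞) < T ω) then (1 : ℝ≥0∞) else 0 := by
            intro n
            rw [Set.indicator_apply]
            exact if_congr (hTgt n ω) rfl rfl
          simp_rw [this]
          exact tsum_indicator_le (T ω)
      _ = (∫⁻ ω, T ω ∂μ) + 1 := by
          rw [lintegral_add_right _ measurable_const]
          simp
  have hsum_ne : (∑' n : ℕ, μ (E n)) ≠ ⊤ := by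
    refine ne_top_of_le_ne_top ?_ hsum
    exact ENNReal.add_ne_top.mpr ⟨hT.ne, ENNReal.one_ne_top⟩
  set A : ℕ → Set Ω := fun n => {ω | ∀ k ≤ n, S n ω ≤ S k ω} with hAdef
  have hAsum : (∑' n : ℕ, μ (A n)) ≠ ⊤ := by
    have heq : ∀ n, μ (A n) = μ (E n) := fun n =>
      measure_record_eq X hmeas hindep hident n
    simpa only [heq] using hsum_ne
  have hfin : ∀ᵐ ω ∂μ, Set.Finite {n : ℕ | ∀ k ≤ n, S n ω ≤ S k ω} := by
    filter_upwards [ae_eventually_notMem hAsum] with ω hω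
    rw [Filter.eventually_atTop] at hω
    obtain ⟨N, hN⟩ := hω
    refine (Set.finite_Iio N).subset fun n hn => ?_
    by_contra hcon
    rw [Set.mem_Iio, not_lt] at hcon
    exact hN n hcon hn
  refine ⟨hfin, ?_⟩
  filter_upwards [hfin] with ω hf
  have h0 : 0 ∈ {n : ℕ | ∀ k ≤ n, S n ω ≤ S k ω} := by
    intro k hk
    rw [Nat.le_zero] at hk
    subst hk
    exact le_refl _
  obtain ⟨b, hb⟩ := (hf.image fun n => S n ω).bddBelow
  refine ⟨b, ?_⟩
  rintro x ⟨n, rfl⟩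
  obtain ⟨r, hrmem, hrmin⟩ :=
    Finset.exists_min_image (Finset.Iic n) (fun k => S k ω) ⟨0, by simp⟩
  have hrn : r ≤ n := Finset.mem_Iic.mp hrmem
  have hrR : r ∈ {m : ℕ | ∀ k ≤ m, S m ω ≤ S k ω} := by
    intro k hk
    exact hrmin k (Finset.mem_Iic.mpr (hk.trans hrn))
  have hbr : b ≤ S r ω := hb ⟨r, hrR, rfl⟩
  exact hbr.trans (hrmin n (Finset.mem_Iic.mpr le_rfl))
end
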